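/- There exists a constant c > 0 such that for every n ≥ 2, every bipartite permutation graph H that contains every star forest on at most n vertices as an induced subgraph has at least c·n·ln n vertices. -/

import Mathlib

set_option maxRecDepth 8000
set_option maxHeartbeats 1000000


open SimpleGraph

/-- A bipartite permutation graph is a letter graph with the path decoder
over some finite alphabet. -/
def IsBPG {V : Type*} [Fintype V] (G : SimpleGraph V) : Prop :=
  ∃ (k : ℕ) (v : Fin (Fintype.card V) ≃ V) (w : Fin (Fintype.card V) → Fin k),
    ∀ i j : Fin (Fintype.card V), i < j →
      (G.Adj (v i) (v j) ↔ (w j : ℕ) = (w i : ℕ) + 1)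

/-- The star `K_{1,p}`, with center `0`. -/
def starGraph (p : ℕ) : SimpleGraph (Fin (p + 1)) :=
  SimpleGraph.fromRel (fun i _ => i = 0)

/-- A star forest: every connected component is a star `K_{1,p}` for some `p ≥ 0`. -/
def IsStarForest {V : Type*} (G : SimpleGraph V) : Prop :=
  ∀ c : G.ConnectedComponent, ∃ p, Nonempty (G.induce c.supp ≃g _root_.starGraph p)

def starsGraph (m d : ℕ) : SimpleGraph (Fin m × Fin (d+1)) where
  Adj x y := x.1 = y.1 ∧ (x.2 = 0 ∧ y.2 ≠ 0 ∨ y.2 = 0 ∧ x.2 ≠ 0)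
  symm := ⟨by rintro x y ⟨h1, h2 | h2⟩ <;> exact ⟨h1.symm, by tauto⟩⟩
  loopless := ⟨by rintro x ⟨h1, h2 | h2⟩ <;> tauto⟩

lemma starsGraph_reach {m d : ℕ} (x y : Fin m × Fin (d+1)) :
    (starsGraph m d).Reachable x y ↔ x.1 = y.1 := by
  constructor
  · rintro ⟨p⟩
    induction p with
    | nil => rfl
    | cons h _ ih => exact h.1.trans ih
  · intro h
    have key : ∀ z : Fin m × Fin (d+1), (starsGraph m d).Reachable z (z.1, 0) := by
      intro z
      by_cases hz : z.2 = 0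
      · exact Reachable.refl _ |>.mono le_rfl |>.trans (by rw [show (z.1, (0:Fin (d+1))) = z from Prod.ext rfl hz.symm])
      · exact SimpleGraph.Adj.reachable ⟨rfl, Or.inr ⟨rfl, hz⟩⟩
    have h1 := key x
    have h2 := key y
    rw [h] at h1
    exact h1.trans h2.symm

lemma starsGraph_isStarForest (m d : ℕ) : IsStarForest (starsGraph m d) := by
  intro c
  refine ⟨d, ?_⟩
  obtain ⟨x, hx⟩ := c.exists_rep
  have hsupp : ∀ y, y ∈ c.supp ↔ y.1 = x.1 := by
    intro y
    rw [ConnectedComponent.mem_supp_iff, ← hx]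
    exact (ConnectedComponent.eq ..).trans (starsGraph_reach y x)
  refine ⟨⟨⟨fun z => z.1.2, fun i => ⟨(x.1, i), (hsupp _).2 rfl⟩, ?_, ?_⟩, ?_⟩⟩
  · rintro ⟨z, hz⟩
    exact Subtype.ext (Prod.ext ((hsupp z).1 hz).symm rfl)
  · intro i; rfl
  · rintro ⟨z, hz⟩ ⟨z', hz'⟩
    simp only [Equiv.coe_fn_mk, _root_.starGraph, fromRel_adj, comap_adj, Function.Embedding.coe_subtype]
    show _ ↔ (starsGraph m d).Adj z z'
    constructor
    · rintro ⟨hne, h0 | h0⟩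
      · exact ⟨((hsupp z).1 hz).trans ((hsupp z').1 hz').symm, Or.inl ⟨h0, by rw [h0] at hne; exact hne.symm⟩⟩
      · exact ⟨((hsupp z).1 hz).trans ((hsupp z').1 hz').symm, Or.inr ⟨h0, by rw [h0] at hne; exact hne⟩⟩
    · rintro ⟨h1, ⟨h0, hn⟩ | ⟨h0, hn⟩⟩
      · exact ⟨by rw [h0]; exact (Ne.symm hn), Or.inl h0⟩
      · exact ⟨by rw [h0]; exact hn, Or.inr h0⟩


lemma core {N m d : ℕ} (hd : 1 ≤ d) (f : Fin N → ℕ)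
    (P : Fin m × Fin (d+1) → Fin N) (hinj : Function.Injective P)
    (hadj : ∀ x y : Fin m × Fin (d+1),
      (x.1 = y.1 ∧ (x.2 = 0 ∧ y.2 ≠ 0 ∨ y.2 = 0 ∧ x.2 ≠ 0)) ↔
      ((P x < P y ∧ f (P y) = f (P x) + 1) ∨ (P y < P x ∧ f (P x) = f (P y) + 1))) :
    m ≤ 2 * ((Finset.univ.image f).filter
      (fun b => (d+1)/2 ≤ (Finset.univ.filter (fun p => f p = b)).card)).card := by
  classical
  set s0 := (d+1)/2 with hs0def
  have hs0 : 1 ≤ s0 := by omega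
  set F : Finset (Fin (d+1)) := Finset.univ.filter (fun i => i ≠ 0) with hF
  have hFcard : F.card = d := by
    rw [hF, Finset.filter_ne', Finset.card_erase_of_mem (Finset.mem_univ _)]
    simp
  set Up : Fin m → Finset (Fin (d+1)) :=
    fun s => F.filter (fun i => P (s,0) < P (s,i)) with hUp
  set Down : Fin m → Finset (Fin (d+1)) :=
    fun s => F.filter (fun i => ¬ P (s,0) < P (s,i)) with hDown
  have step1 : ∀ (s : Fin m) (i : Fin (d+1)), i ≠ 0 →
      (P (s,0) < P (s,i) ∧ f (P (s,i)) = f (P (s,0)) + 1) ∨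
      (P (s,i) < P (s,0) ∧ f (P (s,0)) = f (P (s,i)) + 1) :=
    fun s i hi => (hadj (s,0) (s,i)).1 ⟨rfl, Or.inl ⟨rfl, hi⟩⟩
  have cardsum : ∀ s, (Up s).card + (Down s).card = d := by
    intro s
    rw [hUp, hDown]
    rw [Finset.card_filter_add_card_filter_not, hFcard]
  have memUp : ∀ s i, i ∈ Up s → i ≠ 0 ∧ P (s,0) < P (s,i) := by
    intro s i hi
    rw [hUp, Finset.mem_filter, hF, Finset.mem_filter] at hi
    exact ⟨hi.1.2, hi.2⟩
  have memDown : ∀ s i, i ∈ Down s → i ≠ 0 ∧ P (s,i) < P (s,0) := by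
    intro s i hi
    rw [hDown, Finset.mem_filter, hF, Finset.mem_filter] at hi
    obtain ⟨⟨-, hne⟩, hnlt⟩ := hi
    rcases step1 s i hne with ⟨h, -⟩ | ⟨h, -⟩
    · exact absurd h hnlt
    · exact ⟨hne, h⟩
  have upLetter : ∀ s i, i ∈ Up s → f (P (s,i)) = f (P (s,0)) + 1 := by
    intro s i hi
    obtain ⟨hne, hlt⟩ := memUp s i hi
    rcases step1 s i hne with ⟨-, h⟩ | ⟨h, -⟩
    · exact h
    · exact absurd hlt (asymm h)
  have downLetter : ∀ s i, i ∈ Down s → f (P (s,0)) = f (P (s,i)) + 1 := by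
    intro s i hi
    obtain ⟨hne, hlt⟩ := memDown s i hi
    rcases step1 s i hne with ⟨h, -⟩ | ⟨-, h⟩
    · exact absurd h (asymm hlt)
    · exact h
  have pne : ∀ (s t : Fin m) (i : Fin (d+1)), s ≠ t → P (s,i) ≠ P (t,0) :=
    fun s t i hst h => hst (congrArg Prod.fst (hinj h))
  -- up separation
  have upKey : ∀ s t i j, s ≠ t → i ∈ Up s → j ∈ Up t →
      f (P (s,i)) = f (P (t,j)) → P (s,i) < P (t,j) := by
    intro s t i j hst hi hj heq
    have hnadj := (hadj (s,i) (t,0)).2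
    have hjl := upLetter t j hj
    have hcond : f (P (s,i)) = f (P (t,0)) + 1 := by omega
    have hnlt : ¬ P (t,0) < P (s,i) := by
      intro hlt
      exact (by simpa using (hnadj (Or.inr ⟨hlt, hcond⟩)).1 : s = t) |> hst
    have h2 : P (s,i) < P (t,0) :=
      lt_of_le_of_ne (not_lt.1 hnlt) (pne s t i hst)
    exact h2.trans (memUp t j hj).2
  have upSep : ∀ s t i j, s ≠ t → i ∈ Up s → j ∈ Up t →
      f (P (s,i)) ≠ f (P (t,j)) := by
    intro s t i j hst hi hj heq
    exact lt_asymm (upKey s t i j hst hi hj heq) (upKey t s j i hst.symm hj hi heq.symm)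
  -- down separation
  have downKey : ∀ s t i j, s ≠ t → i ∈ Down s → j ∈ Down t →
      f (P (s,i)) = f (P (t,j)) → P (t,0) < P (s,0) := by
    intro s t i j hst hi hj heq
    have hnadj := (hadj (s,i) (t,0)).2
    have hjl := downLetter t j hj
    have hcond : f (P (t,0)) = f (P (s,i)) + 1 := by omega
    have hnlt : ¬ P (s,i) < P (t,0) := by
      intro hlt
      exact (by simpa using (hnadj (Or.inl ⟨hlt, hcond⟩)).1 : s = t) |> hst
    have h2 : P (t,0) < P (s,i) :=
      lt_of_le_of_ne (not_lt.1 hnlt) (pne s t i hst).symm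
    exact h2.trans (memDown s i hi).2
  have downSep : ∀ s t i j, s ≠ t → i ∈ Down s → j ∈ Down t →
      f (P (s,i)) ≠ f (P (t,j)) := by
    intro s t i j hst hi hj heq
    exact lt_asymm (downKey s t i j hst hi hj heq) (downKey t s j i hst.symm hj hi heq.symm)
  -- majority
  have hmaj : ∀ s, ¬ s0 ≤ (Up s).card → s0 ≤ (Down s).card := by
    intro s h
    have := cardsum s
    omega
  set Q : Fin m → Prop := fun s => s0 ≤ (Up s).card with hQ
  set assign : Fin m → ℕ :=
    fun s => if s0 ≤ (Up s).card then f (P (s,0)) + 1 else f (P (s,0)) - 1 with hassign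
  set A := ((Finset.univ.image f).filter
      (fun b => s0 ≤ (Finset.univ.filter (fun p => f p = b)).card)) with hA
  have upVal : ∀ s i, i ∈ Up s → Q s → f (P (s,i)) = assign s := by
    intro s i hi hq
    rw [hassign]
    simp only [if_pos (show s0 ≤ (Up s).card from hq)]
    exact upLetter s i hi
  have downVal : ∀ s i, i ∈ Down s → ¬ Q s → f (P (s,i)) = assign s := by
    intro s i hi hq
    have := downLetter s i hi
    rw [hassign]
    simp only [if_neg (show ¬ s0 ≤ (Up s).card from hq)]
    omega
  have sndinj : ∀ (s : Fin m), Function.Injective (fun i : Fin (d+1) => P (s,i)) := by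
    intro s i j h
    have := hinj h
    simpa using congrArg Prod.snd this
  have hclass : ∀ s, assign s ∈ A := by
    intro s
    rw [hA, Finset.mem_filter]
    by_cases hq : Q s
    · have hcard : s0 ≤ (Up s).card := hq
      obtain ⟨i, hi⟩ := Finset.card_pos.1 (lt_of_lt_of_le hs0 hcard)
      refine ⟨Finset.mem_image.2 ⟨P (s,i), Finset.mem_univ _, upVal s i hi hq⟩, ?_⟩
      refine le_trans hcard (Finset.card_le_card_of_injOn (fun i => P (s,i)) ?_ ?_)
      · intro j hj
        simp only [Finset.mem_coe, Finset.mem_filter, Finset.mem_univ, true_and]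
        exact upVal s j hj hq
      · exact fun a _ b _ h => sndinj s h
    · have hcard : s0 ≤ (Down s).card := hmaj s hq
      obtain ⟨i, hi⟩ := Finset.card_pos.1 (lt_of_lt_of_le hs0 hcard)
      refine ⟨Finset.mem_image.2 ⟨P (s,i), Finset.mem_univ _, downVal s i hi hq⟩, ?_⟩
      refine le_trans hcard (Finset.card_le_card_of_injOn (fun i => P (s,i)) ?_ ?_)
      · intro j hj
        simp only [Finset.mem_coe, Finset.mem_filter, Finset.mem_univ, true_and]
        exact downVal s j hj hq
      · exact fun a _ b _ h => sndinj s h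
  -- fibers of assign have at most 2 elements
  have helper1 : ∀ s t, s ≠ t → Q s → Q t → assign s ≠ assign t := by
    intro s t hst hqs hqt heq
    obtain ⟨i, hi⟩ := Finset.card_pos.1 (lt_of_lt_of_le hs0 hqs)
    obtain ⟨j, hj⟩ := Finset.card_pos.1 (lt_of_lt_of_le hs0 hqt)
    exact upSep s t i j hst hi hj (by rw [upVal s i hi hqs, upVal t j hj hqt, heq])
  have helper2 : ∀ s t, s ≠ t → ¬ Q s → ¬ Q t → assign s ≠ assign t := by
    intro s t hst hqs hqt heq
    obtain ⟨i, hi⟩ := Finset.card_pos.1 (lt_of_lt_of_le hs0 (hmaj s hqs))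
    obtain ⟨j, hj⟩ := Finset.card_pos.1 (lt_of_lt_of_le hs0 (hmaj t hqt))
    exact downSep s t i j hst hi hj (by rw [downVal s i hi hqs, downVal t j hj hqt, heq])
  have fiber2 : ∀ b ∈ Finset.univ.image assign,
      ((Finset.univ : Finset (Fin m)).filter (fun s => assign s = b)).card ≤ 2 := by
    intro b _
    by_contra hgt
    push_neg at hgt
    obtain ⟨s, t, u, hs, ht, hu, hst, hsu, htu⟩ := Finset.two_lt_card_iff.1 hgt
    simp only [Finset.mem_filter, Finset.mem_univ, true_and] at hs ht hu
    by_cases qs : Q s <;> by_cases qt : Q t <;> by_cases qu : Q u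
    · exact helper1 s t hst qs qt (hs.trans ht.symm)
    · exact helper1 s t hst qs qt (hs.trans ht.symm)
    · exact helper1 s u hsu qs qu (hs.trans hu.symm)
    · exact helper2 t u htu qt qu (ht.trans hu.symm)
    · exact helper1 t u htu qt qu (ht.trans hu.symm)
    · exact helper2 s u hsu qs qu (hs.trans hu.symm)
    · exact helper2 s t hst qs qt (hs.trans ht.symm)
    · exact helper2 s t hst qs qt (hs.trans ht.symm)
  have h1 : (Finset.univ : Finset (Fin m)).card ≤ 2 * (Finset.univ.image assign).card :=
    Finset.card_le_mul_card_image (f := assign) Finset.univ 2 fiber2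
  have h2 : Finset.univ.image assign ⊆ A := by
    intro b hb
    obtain ⟨s, -, rfl⟩ := Finset.mem_image.1 hb
    exact hclass s
  calc m = (Finset.univ : Finset (Fin m)).card := by simp
    _ ≤ 2 * (Finset.univ.image assign).card := h1
    _ ≤ 2 * A.card := by
        exact Nat.mul_le_mul_left 2 (Finset.card_le_card h2)


lemma sum_halves (j : ℕ) : ∑ i ∈ Finset.range (j+1), (2^i+1)/2 = 2^j := by
  induction j with
  | zero => decide
  | succ j ih =>
    rw [Finset.sum_range_succ, ih, pow_succ]
    omega

lemma pow_le_twos (j : ℕ) : 2^j ≤ 2*((2^j+1)/2) := by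
  cases j with
  | zero => decide
  | succ j => rw [pow_succ]; omega

lemma dcount {N : ℕ} (f : Fin N → ℕ) (t : ℕ) :
    ∑ i ∈ Finset.range (t+1), (2^i+1)/2 * ((Finset.univ.image f).filter
      (fun b => (2^i+1)/2 ≤ (Finset.univ.filter (fun p => f p = b)).card)).card ≤ 2 * N := by
  classical
  set K := Finset.univ.image f with hK
  set cb : ℕ → ℕ := fun b => (Finset.univ.filter (fun p : Fin N => f p = b)).card with hcb
  have hN : ∑ b ∈ K, cb b = N := by
    have := (Finset.card_eq_sum_card_fiberwise
      (f := f) (s := Finset.univ) (t := K)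
      (fun x _ => Finset.mem_image_of_mem f (Finset.mem_univ x)))
    rw [← Fintype.card_fin N, ← Finset.card_univ, this]
  have inner : ∀ b, ∑ i ∈ Finset.range (t+1),
      (if (2^i+1)/2 ≤ cb b then (2^i+1)/2 else 0) ≤ 2 * cb b := by
    intro b
    rw [← Finset.sum_filter]
    set S := (Finset.range (t+1)).filter (fun i => (2^i+1)/2 ≤ cb b) with hS
    rcases S.eq_empty_or_nonempty with h | h
    · rw [h, Finset.sum_empty]; exact Nat.zero_le _
    · have hj := S.max'_mem h
      set j := S.max' h with hjdef
      have hsub : S ⊆ Finset.range (j+1) :=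
        fun i hi => Finset.mem_range.2 (Nat.lt_succ_of_le (S.le_max' i hi))
      calc ∑ i ∈ S, (2^i+1)/2
          ≤ ∑ i ∈ Finset.range (j+1), (2^i+1)/2 :=
            Finset.sum_le_sum_of_subset hsub
        _ = 2^j := sum_halves j
        _ ≤ 2*((2^j+1)/2) := pow_le_twos j
        _ ≤ 2 * cb b := by
            have := (Finset.mem_filter.1 hj).2
            omega
  calc ∑ i ∈ Finset.range (t+1), (2^i+1)/2 * (K.filter (fun b => (2^i+1)/2 ≤ cb b)).card
      = ∑ i ∈ Finset.range (t+1), ∑ b ∈ K,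
        (if (2^i+1)/2 ≤ cb b then (2^i+1)/2 else 0) := by
        refine Finset.sum_congr rfl fun i _ => ?_
        rw [← Finset.sum_filter, Finset.sum_const, smul_eq_mul, mul_comm]
    _ = ∑ b ∈ K, ∑ i ∈ Finset.range (t+1),
        (if (2^i+1)/2 ≤ cb b then (2^i+1)/2 else 0) := Finset.sum_comm
    _ ≤ ∑ b ∈ K, 2 * cb b := Finset.sum_le_sum fun b _ => inner b
    _ = 2 * N := by rw [← Finset.mul_sum, hN]



/-- Every bipartite permutation graph containing all star forests on at most
`n ≥ 2` vertices as induced subgraphs has at least `c · n · ln n` vertices. -/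
theorem universal_star_forest_lower_bound :
    ∃ c : ℝ, 0 < c ∧ ∀ n : ℕ, 2 ≤ n →
      ∀ (W : Type) [Fintype W] (H : SimpleGraph W), IsBPG H →
        (∀ (U : Type) [Fintype U] (G : SimpleGraph U), IsStarForest G →
          Fintype.card U ≤ n → Nonempty (G ↪g H)) →
        c * n * Real.log n ≤ Fintype.card W := by
  classical
  refine ⟨1/64, by norm_num, ?_⟩
  intro n hn W _ H hBPG huniv
  set N := Fintype.card W with hNdef
  obtain ⟨k, v, w, hw⟩ := hBPG
  set f : Fin N → ℕ := fun p => (w p : ℕ) with hf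
  have hn0 : n ≠ 0 := by omega
  have hnR : (2:ℝ) ≤ n := by exact_mod_cast hn
  have hln0 : 0 ≤ Real.log n := Real.log_nonneg (by linarith)
  -- trivial bound N ≥ n
  have hNn : n ≤ N := by
    obtain ⟨e⟩ := huniv (Fin n × Fin 1) (starsGraph n 0) (starsGraph_isStarForest n 0)
      (by simp)
    have := Fintype.card_le_of_embedding e.toEmbedding
    simpa using this
  rcases lt_or_ge n (2^92) with hsmall | hlarge
  · -- small case: log n ≤ 64 so trivial bound suffices
    have hlog : Real.log n ≤ 64 := by
      have h1 : (n:ℝ) ≤ 2^92 := by exact_mod_cast hsmall.le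
      have h2 : Real.log n ≤ Real.log ((2:ℝ)^92) := Real.log_le_log (by linarith) h1
      rw [Real.log_pow] at h2
      have := Real.log_two_lt_d9
      norm_num at h2 ⊢
      nlinarith
    calc (1/64) * n * Real.log n ≤ (1/64) * n * 64 := by nlinarith
      _ = n := by ring
      _ ≤ N := by exact_mod_cast hNn
  · -- main case
    have hHadj : ∀ i j : Fin N, H.Adj (v i) (v j) ↔
        ((i < j ∧ f j = f i + 1) ∨ (j < i ∧ f i = f j + 1)) := by
      intro i j
      rcases lt_trichotomy i j with h | h | h
      · rw [hw i j h]
        constructor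
        · exact fun hh => Or.inl ⟨h, hh⟩
        · rintro (⟨-, hh⟩ | ⟨h', -⟩)
          · exact hh
          · exact absurd h (asymm h')
      · subst h
        constructor
        · exact fun hadj => absurd hadj (H.loopless.irrefl _)
        · rintro (⟨h', -⟩ | ⟨h', -⟩) <;> exact absurd h' (lt_irrefl i)
      · rw [SimpleGraph.adj_comm, hw j i h]
        constructor
        · exact fun hh => Or.inr ⟨h, hh⟩
        · rintro (⟨h', -⟩ | ⟨-, hh⟩)
          · exact absurd h (asymm h')
          · exact hh
    have hembP : ∀ m dd : ℕ, m * (dd+1) ≤ n →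
        ∃ P : Fin m × Fin (dd+1) → Fin N, Function.Injective P ∧
        ∀ x y : Fin m × Fin (dd+1),
          (x.1 = y.1 ∧ (x.2 = 0 ∧ y.2 ≠ 0 ∨ y.2 = 0 ∧ x.2 ≠ 0)) ↔
          ((P x < P y ∧ f (P y) = f (P x) + 1) ∨ (P y < P x ∧ f (P x) = f (P y) + 1)) := by
      intro m dd hmd
      obtain ⟨e⟩ := huniv (Fin m × Fin (dd+1)) (starsGraph m dd)
        (starsGraph_isStarForest m dd) (by simpa using hmd)
      refine ⟨fun x => v.symm (e x), ?_, ?_⟩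
      · intro a b hab
        exact e.injective (v.symm.injective hab)
      · intro x y
        have h1 : (starsGraph m dd).Adj x y ↔ H.Adj (e x) (e y) := e.map_adj_iff.symm
        have h2 : H.Adj (e x) (e y) ↔ H.Adj (v (v.symm (e x))) (v (v.symm (e y))) := by
          rw [Equiv.apply_symm_apply, Equiv.apply_symm_apply]
        exact h1.trans (h2.trans (hHadj _ _))
    have hAi : ∀ i : ℕ, n / 2^(i+1) ≤ 2 * ((Finset.univ.image f).filter
        (fun b => (2^i+1)/2 ≤ (Finset.univ.filter (fun p => f p = b)).card)).card := by
      intro i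
      have hcard : n / 2^(i+1) * (2^i+1) ≤ n := by
        calc n / 2^(i+1) * (2^i+1) ≤ n / 2^(i+1) * 2^(i+1) := by
              refine Nat.mul_le_mul_left _ ?_
              rw [pow_succ]
              have : 1 ≤ 2^i := Nat.one_le_two_pow
              omega
          _ ≤ n := Nat.div_mul_le_self n _
      obtain ⟨P, hPinj, hPadj⟩ := hembP (n / 2^(i+1)) (2^i) hcard
      exact core Nat.one_le_two_pow f P hPinj hPadj
    set L := Nat.log 2 n with hLdef
    set t := L - 2 with htdef
    have hL : 92 ≤ L := (Nat.le_log_iff_pow_le (by norm_num) hn0).2 hlarge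
    have h2L : 2^L ≤ n := Nat.pow_log_le_self 2 hn0
    have hnlt : n < 2^(L+1) := Nat.lt_pow_succ_log_self (by norm_num) n
    have hLn : L ≤ n := Nat.log_le_self 2 n
    -- per-index nat bound
    have hterm : ∀ i : ℕ, n/4 - 2^i ≤ 2 * ((2^i+1)/2 * ((Finset.univ.image f).filter
        (fun b => (2^i+1)/2 ≤ (Finset.univ.filter (fun p => f p = b)).card)).card) := by
      intro i
      set A := ((Finset.univ.image f).filter
        (fun b => (2^i+1)/2 ≤ (Finset.univ.filter (fun p => f p = b)).card)).card with hA
      have hpos : 0 < 2^i := Nat.pow_pos (by norm_num)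
      have h1 : n/4 - 2^i ≤ 2^i * ((n/4) / 2^i) := by
        have hdm := Nat.div_add_mod (n/4) (2^i)
        have hmod := Nat.mod_lt (n/4) hpos
        omega
      have h2 : (n/4) / 2^i = (n / 2^(i+1))/2 := by
        rw [Nat.div_div_eq_div_mul, Nat.div_div_eq_div_mul]
        congr 1
        rw [pow_succ]
        ring
      have h4 : (n / 2^(i+1))/2 ≤ A := by have := hAi i; omega
      have h5 : 2^i ≤ 2*((2^i+1)/2) := pow_le_twos i
      calc n/4 - 2^i ≤ 2^i * ((n/4)/2^i) := h1
        _ = 2^i * ((n/2^(i+1))/2) := by rw [h2]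
        _ ≤ 2^i * A := Nat.mul_le_mul_left _ h4
        _ ≤ (2*((2^i+1)/2)) * A := Nat.mul_le_mul_right _ h5
        _ = 2 * ((2^i+1)/2 * A) := by ring
    have hsum2 : ∑ i ∈ Finset.range (t+1), (n/4 - 2^i) ≤ 4 * N := by
      calc ∑ i ∈ Finset.range (t+1), (n/4 - 2^i)
          ≤ ∑ i ∈ Finset.range (t+1), 2 * ((2^i+1)/2 * ((Finset.univ.image f).filter
            (fun b => (2^i+1)/2 ≤ (Finset.univ.filter (fun p => f p = b)).card)).card) :=
            Finset.sum_le_sum (fun i _ => hterm i)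
        _ = 2 * ∑ i ∈ Finset.range (t+1), (2^i+1)/2 * ((Finset.univ.image f).filter
            (fun b => (2^i+1)/2 ≤ (Finset.univ.filter (fun p => f p = b)).card)).card :=
            (Finset.mul_sum _ _ _).symm
        _ ≤ 2 * (2 * N) := Nat.mul_le_mul_left _ (dcount f t)
        _ = 4 * N := by ring
    -- move to ℝ
    have castsub : ∀ a b : ℕ, (a:ℝ) - b ≤ ((a - b : ℕ):ℝ) := by
      intro a b
      rcases le_total b a with h | h
      · rw [Nat.cast_sub h]
      · have h1 : a - b = 0 := by omega
        rw [h1]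
        have : (a:ℝ) ≤ b := by exact_mod_cast h
        simp
        linarith
    have hq : ((n/4 : ℕ):ℝ) ≥ (n:ℝ)/4 - 1 := by
      have h1 : 4 * (n/4) + 3 ≥ n := by omega
      have h2 : (4:ℝ) * ((n/4 : ℕ):ℝ) + 3 ≥ (n:ℝ) := by exact_mod_cast h1
      linarith
    have hsumR : ((t:ℝ)+1) * ((n:ℝ)/4 - 1) - ((2:ℝ)^(t+1) - 1) ≤ 4 * N := by
      have h1 : ∀ i ∈ Finset.range (t+1), (n:ℝ)/4 - 1 - 2^i ≤ ((n/4 - 2^i : ℕ):ℝ) := by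
        intro i _
        have := castsub (n/4) (2^i)
        push_cast at this ⊢
        linarith
      calc ((t:ℝ)+1) * ((n:ℝ)/4 - 1) - ((2:ℝ)^(t+1) - 1)
          = ∑ i ∈ Finset.range (t+1), ((n:ℝ)/4 - 1 - 2^i) := by
            rw [Finset.sum_sub_distrib, Finset.sum_const, Finset.card_range,
              geom_sum_eq (by norm_num : (2:ℝ) ≠ 1)]
            ring
        _ ≤ ∑ i ∈ Finset.range (t+1), ((n/4 - 2^i : ℕ):ℝ) := Finset.sum_le_sum h1
        _ = ((∑ i ∈ Finset.range (t+1), (n/4 - 2^i) : ℕ):ℝ) := (Nat.cast_sum _ _).symm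
        _ ≤ ((4 * N : ℕ):ℝ) := by exact_mod_cast hsum2
        _ = 4 * N := by push_cast; ring
    clear hterm hAi hsum2 hembP hHadj huniv hw castsub hq
    have htL : ((t:ℝ)+1) = (L:ℝ) - 1 := by
      have h : t + 1 = L - 1 := by omega
      rw [show ((t:ℝ)+1) = ((t+1:ℕ):ℝ) from by push_cast; ring, h,
        Nat.cast_sub (by omega : 1 ≤ L)]
      norm_num
    have hpowhalf : (2:ℝ)^(t+1) ≤ (n:ℝ)/2 := by
      have h1 : t + 1 + 1 = L := by omega
      have h2 : (2:ℝ)^L ≤ n := by exact_mod_cast h2L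
      have h3 : (2:ℝ)^(t+1) * 2 = (2:ℝ)^L := by rw [← h1]; ring
      linarith
    have hmain : ((L:ℝ)-1) * ((n:ℝ)/4 - 1) - (n:ℝ)/2 ≤ 4 * N := by
      rw [← htL]
      nlinarith [hsumR, hpowhalf]
    have hlog : Real.log n ≤ (L:ℝ) := by
      have h1 : (n:ℝ) < (2:ℝ)^(L+1) := by exact_mod_cast hnlt
      have h2 : Real.log n ≤ ((L:ℝ)+1) * Real.log 2 := by
        calc Real.log n ≤ Real.log ((2:ℝ)^(L+1)) := Real.log_le_log (by linarith) h1.le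
          _ = ((L:ℝ)+1) * Real.log 2 := by rw [Real.log_pow]; push_cast; ring
      have h3 := Real.log_two_lt_d9
      have h4 : (3:ℝ) ≤ L := by
        have : (92:ℝ) ≤ L := by exact_mod_cast hL
        linarith
      nlinarith [Real.log_two_gt_d9]
    have hL92 : (92:ℝ) ≤ L := by exact_mod_cast hL
    have hLnR : (L:ℝ) ≤ n := by exact_mod_cast hLn
    have key : (n:ℝ) * Real.log n / 16 ≤ ((L:ℝ)-1)*((n:ℝ)/4 - 1) - (n:ℝ)/2 := by
      have e1 : (n:ℝ) * Real.log n ≤ n * L :=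
        mul_le_mul_of_nonneg_left hlog (by linarith)
      nlinarith [mul_nonneg (sub_nonneg.2 hL92) (by linarith : (0:ℝ) ≤ (n:ℝ)),
        mul_nonneg (sub_nonneg.2 hLnR) (by linarith : (0:ℝ) ≤ (n:ℝ))]
    calc (1/64) * n * Real.log n = ((n:ℝ) * Real.log n / 16)/4 := by ring
      _ ≤ (((L:ℝ)-1)*((n:ℝ)/4 - 1) - (n:ℝ)/2)/4 := by linarith
      _ ≤ (4*(N:ℝ))/4 := by linarith
      _ = N := by ring
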